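/- Let f be closed and μ-strongly convex with minimizer x̄₀ and minimum f*. Fix penalties 0 = λ₋₁ and λ₀ ≤ λ₁ ≤ ... ≤ λ_T > 0 and centers x₀,...,x_T. Define f^i(x) = f(x) + (λ_i/2)‖x - x_i‖² with minimizer x̄_{i+1}. Then for all j ≥ 0, f^j(x̄_{j+1}) - f* ≤ Σ_{i=0}^{j} (λ_i/2)‖x̄_i - x_i‖². -/
import Mathlib


open Set Finset

/-- inexact proximal point bound on the proximal values.  Here `lam 0 = 0`
plays the role of `λ₋₁`, and `λ_i` from the paper is `lam (i+1)`; the proximal function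
is `f^i(y) = f(y) + (λ_i/2)‖y - x_i‖²` with minimizer `x̄_{i+1}`, and `x̄ 0` minimizes `f`.
Then `f^j(x̄_{j+1}) - f* ≤ ∑_{i=0}^{j} (λ_i/2)‖x̄_i - x_i‖²` for all `0 ≤ j ≤ T`. -/
theorem inexact_prox_value_bound {d : ℕ} (T : ℕ) (μ : ℝ) (hμ : 0 < μ)
    (f : EuclideanSpace ℝ (Fin d) → ℝ)
    (hlsc : LowerSemicontinuous f)
    (hsc : ConvexOn ℝ Set.univ (fun x => f x - μ / 2 * ‖x‖ ^ 2))
    (lam : ℕ → ℝ) (hlam0 : lam 0 = 0) (hmono : Monotone lam)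
    (hpos : ∀ i, 1 ≤ i → i ≤ T + 1 → 0 < lam i)
    (x xbar : ℕ → EuclideanSpace ℝ (Fin d))
    (fstar : ℝ) (hfstar : fstar = f (xbar 0))
    (hmin0 : ∀ y, f (xbar 0) ≤ f y)
    (hmin : ∀ i y, f (xbar (i + 1)) + lam (i + 1) / 2 * ‖xbar (i + 1) - x i‖ ^ 2
        ≤ f y + lam (i + 1) / 2 * ‖y - x i‖ ^ 2) :
    ∀ j, j ≤ T →
      (f (xbar (j + 1)) + lam (j + 1) / 2 * ‖xbar (j + 1) - x j‖ ^ 2) - fstar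
        ≤ ∑ i ∈ Finset.range (j + 1), lam (i + 1) / 2 * ‖xbar i - x i‖ ^ 2 := by
  intro j hj
  induction j with
  | zero =>
    have h := hmin 0 (xbar 0)
    have e : ∑ i ∈ Finset.range (0 + 1), lam (i + 1) / 2 * ‖xbar i - x i‖ ^ 2
        = lam 1 / 2 * ‖xbar 0 - x 0‖ ^ 2 := by simp
    rw [e, hfstar]
    linarith
  | succ n ih =>
    have ihn := ih (le_trans (Nat.le_succ n) hj)
    have h1 := hmin (n + 1) (xbar (n + 1))
    have hnn : (0:ℝ) ≤ lam (n + 1 + 1) / 2 * ‖xbar (n + 1) - x (n + 1)‖ ^ 2 := by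
      have : (0:ℝ) ≤ lam (n + 1 + 1) := hlam0 ▸ hmono (Nat.zero_le _)
      positivity
    have hnn2 : (0:ℝ) ≤ lam (n + 1) / 2 * ‖xbar (n + 1) - x n‖ ^ 2 := by
      have : (0:ℝ) ≤ lam (n + 1) := hlam0 ▸ hmono (Nat.zero_le _)
      positivity
    rw [Finset.sum_range_succ]
    linarith
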